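/- For every positive integer j, Σ_{k=2}^{∞} 1/(k^j (k-1)^j) = 2 (-1)^j Σ_{m=0}^{⌊j/2⌋} C(2j-2m-1, j-1) ζ(2m). -/

import Mathlib

open Finset

lemma aux_pf (a b : ℕ) (x : ℝ) (hx : x ≠ 0) (hx1 : x - 1 ≠ 0) :
    1 / (x ^ (a+1) * (x - 1) ^ (b+1))
      = (-1) ^ (b+1) * ∑ i ∈ range (a+1), (((b + i).choose b : ℝ)) / x ^ (a + 1 - i)
        + ∑ i ∈ range (b+1), (-1) ^ i * (((a + i).choose a : ℝ)) / (x - 1) ^ (b + 1 - i) := by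
  induction a generalizing b with
  | zero =>
    induction b with
    | zero => simp; field_simp; ring
    | succ b ihb =>
      have key : 1 / (x ^ (0+1) * (x-1) ^ (b+2))
          = 1 / (x-1) ^ (b+2) - 1 / (x ^ (0+1) * (x-1) ^ (b+1)) := by
        field_simp; ring
      rw [key, ihb]
      rw [Finset.sum_range_succ' (fun i => (-1:ℝ) ^ i * (((0 + i).choose 0 : ℝ)) / (x - 1) ^ (b + 2 - i)) (b+1)]
      simp only [Nat.zero_add, Nat.add_zero, Nat.choose_zero_right, Nat.cast_one, Nat.choose_self,
        Finset.sum_range_one, Nat.add_sub_cancel, pow_zero, pow_succ]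
      have h2 : ∀ i ∈ range (b+1), (-1:ℝ) ^ i * (-1) * 1 / (x - 1) ^ (b + 2 - (i+1))
          = -((-1:ℝ) ^ i * 1 / (x - 1) ^ (b + 1 - i)) := by
        intro i hi
        have : b + 2 - (i+1) = b + 1 - i := by omega
        rw [this]; ring
      rw [Finset.sum_congr rfl h2, Finset.sum_neg_distrib]
      simp only [Nat.sub_zero, pow_succ]
      ring
  | succ a iha =>
    induction b with
    | zero =>
      have key : 1 / (x ^ (a+1+1) * (x-1) ^ (0+1))
          = 1 / (x ^ (a+1) * (x-1) ^ (0+1)) - 1 / x ^ (a+1+1) := by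
        field_simp; ring
      rw [key, iha 0]
      rw [Finset.sum_range_succ' (fun i => (((0 + i).choose 0 : ℝ)) / x ^ (a + 1 + 1 - i)) (a+1)]
      have h2 : ∀ i ∈ range (a+1), (((0 + (i+1)).choose 0 : ℝ)) / x ^ (a + 1 + 1 - (i+1))
          = (((0 + i).choose 0 : ℝ)) / x ^ (a + 1 - i) := by
        intro i hi
        have : a + 1 + 1 - (i+1) = a + 1 - i := by omega
        simp [this]
      rw [Finset.sum_congr rfl h2]
      simp only [Nat.zero_add, Nat.add_zero, Nat.choose_zero_right, Nat.cast_one, Nat.choose_self,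
        Nat.sub_zero, Finset.sum_range_one]
      ring
    | succ b ihb =>
      have key : 1 / (x ^ (a+1+1) * (x-1) ^ (b+1+1))
          = 1 / (x ^ (a+1) * (x-1) ^ (b+1+1)) - 1 / (x ^ (a+1+1) * (x-1) ^ (b+1)) := by
        field_simp; ring
      have e1 : ∑ i ∈ range (a+1+1), (((b + 1 + i).choose (b+1) : ℝ)) / x ^ (a + 1 + 1 - i)
          = ∑ i ∈ range (a+1), (((b + 1 + i).choose (b+1) : ℝ)) / x ^ (a + 1 - i)
            + ∑ i ∈ range (a+1+1), (((b + i).choose b : ℝ)) / x ^ (a + 1 + 1 - i) := by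
        rw [Finset.sum_range_succ' (fun i => (((b + 1 + i).choose (b+1) : ℝ)) / x ^ (a + 1 + 1 - i)) (a+1),
            Finset.sum_range_succ' (fun i => (((b + i).choose b : ℝ)) / x ^ (a + 1 + 1 - i)) (a+1)]
        have h : ∀ i ∈ range (a+1), (((b + 1 + (i+1)).choose (b+1) : ℝ)) / x ^ (a + 1 + 1 - (i+1))
            = (((b + 1 + i).choose (b+1) : ℝ)) / x ^ (a + 1 - i)
              + (((b + (i+1)).choose b : ℝ)) / x ^ (a + 1 + 1 - (i+1)) := by
          intro i _
          have h1 : a + 1 + 1 - (i+1) = a + 1 - i := by omega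
          have h2 : b + 1 + (i+1) = (b + 1 + i) + 1 := by omega
          have h3 : b + (i+1) = b + 1 + i := by omega
          rw [h1, h2, h3, Nat.choose_succ_succ (b+1+i) b]
          push_cast; ring
        rw [Finset.sum_congr rfl h, Finset.sum_add_distrib]
        simp [Nat.choose_self]
        ring
      have e2 : ∑ i ∈ range (b+1+1), (-1:ℝ) ^ i * (((a + 1 + i).choose (a+1) : ℝ)) / (x - 1) ^ (b + 1 + 1 - i)
          = ∑ i ∈ range (b+1+1), (-1:ℝ) ^ i * (((a + i).choose a : ℝ)) / (x - 1) ^ (b + 1 + 1 - i)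
            - ∑ i ∈ range (b+1), (-1:ℝ) ^ i * (((a + 1 + i).choose (a+1) : ℝ)) / (x - 1) ^ (b + 1 - i) := by
        rw [Finset.sum_range_succ' (fun i => (-1:ℝ) ^ i * (((a + 1 + i).choose (a+1) : ℝ)) / (x - 1) ^ (b + 1 + 1 - i)) (b+1),
            Finset.sum_range_succ' (fun i => (-1:ℝ) ^ i * (((a + i).choose a : ℝ)) / (x - 1) ^ (b + 1 + 1 - i)) (b+1)]
        have h : ∀ i ∈ range (b+1), (-1:ℝ) ^ (i+1) * (((a + 1 + (i+1)).choose (a+1) : ℝ)) / (x - 1) ^ (b + 1 + 1 - (i+1))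
            = (-1:ℝ) ^ (i+1) * (((a + (i+1)).choose a : ℝ)) / (x - 1) ^ (b + 1 + 1 - (i+1))
              - (-1:ℝ) ^ i * (((a + 1 + i).choose (a+1) : ℝ)) / (x - 1) ^ (b + 1 - i) := by
          intro i _
          have h1 : b + 1 + 1 - (i+1) = b + 1 - i := by omega
          have h2 : a + 1 + (i+1) = (a + 1 + i) + 1 := by omega
          have h3 : a + (i+1) = a + 1 + i := by omega
          rw [h1, h2, h3, Nat.choose_succ_succ (a+1+i) a]
          push_cast; ring
        rw [Finset.sum_congr rfl h, Finset.sum_sub_distrib]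
        simp [Nat.choose_self]
        ring
      rw [key, iha (b+1), ihb, e1, e2]
      ring


noncomputable def Zr (p : ℕ) : ℝ := ∑' n : ℕ, 1 / ((n : ℝ) + 1) ^ p

lemma Zr_summable {p : ℕ} (hp : 2 ≤ p) : Summable (fun n : ℕ => 1 / ((n : ℝ) + 1) ^ p) := by
  have h : Summable (fun n : ℕ => 1 / (n : ℝ) ^ p) := Real.summable_one_div_nat_pow.mpr (by omega)
  have := (summable_nat_add_iff 1).2 h
  simpa using this

lemma Zr_shift_summable {p : ℕ} (hp : 2 ≤ p) : Summable (fun k : ℕ => 1 / ((k : ℝ) + 2) ^ p) := by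
  have := (summable_nat_add_iff 1).2 (Zr_summable hp)
  refine this.congr fun k => ?_
  push_cast; ring_nf

lemma Zr_shift {p : ℕ} (hp : 2 ≤ p) : (∑' k : ℕ, 1 / ((k : ℝ) + 2) ^ p) = Zr p - 1 := by
  have h := Summable.sum_add_tsum_nat_add (f := fun n : ℕ => 1 / ((n : ℝ) + 1) ^ p) 1 (Zr_summable hp)
  have h2 : (∑' k : ℕ, 1 / ((k : ℝ) + 2) ^ p) = ∑' k : ℕ, 1 / (((k + 1 : ℕ) : ℝ) + 1) ^ p := by
    refine tsum_congr fun k => ?_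
    push_cast; ring_nf
  rw [h2]
  have h3 : ∑ i ∈ range 1, 1 / ((i : ℝ) + 1) ^ p = 1 := by simp
  rw [h3] at h
  rw [show Zr p = ∑' n : ℕ, 1 / ((n : ℝ) + 1) ^ p from rfl, ← h]
  ring

lemma zeta_nat (m : ℕ) (hm : 1 ≤ m) : riemannZeta (2 * (m : ℂ)) = ((Zr (2 * m) : ℝ) : ℂ) := by
  rw [zeta_eq_tsum_one_div_nat_add_one_cpow (by
      simp only [Complex.mul_re, Complex.re_ofNat, Complex.natCast_re, Complex.im_ofNat,
        Complex.natCast_im, mul_zero, sub_zero]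
      have : (1:ℝ) ≤ (m:ℝ) := by exact_mod_cast hm
      linarith)]
  rw [Zr, Complex.ofReal_tsum]
  refine tsum_congr fun n => ?_
  have h1 : (2 * (m : ℂ)) = ((2 * m : ℕ) : ℂ) := by push_cast; ring
  rw [h1, Complex.cpow_natCast]
  push_cast
  ring

lemma tele : HasSum (fun k : ℕ => 1 / ((k : ℝ) + 1) - 1 / ((k : ℝ) + 2)) 1 := by
  have hsum : Summable (fun k : ℕ => 1 / ((k : ℝ) + 1) - 1 / ((k : ℝ) + 2)) := by
    refine Summable.of_nonneg_of_le (fun k => ?_) (fun k => ?_) (Zr_summable le_rfl)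
    · have h1 : (0:ℝ) < (k : ℝ) + 1 := by positivity
      have h2 : (0:ℝ) < (k : ℝ) + 2 := by positivity
      rw [sub_nonneg]
      apply one_div_le_one_div_of_le h1; linarith
    · have h1 : (0:ℝ) < (k : ℝ) + 1 := by positivity
      have h2 : (0:ℝ) < (k : ℝ) + 2 := by positivity
      have : 1 / ((k : ℝ) + 1) - 1 / ((k : ℝ) + 2) = 1 / (((k:ℝ)+1) * ((k:ℝ)+2)) := by
        field_simp; ring
      rw [this]
      apply one_div_le_one_div_of_le (by positivity)
      rw [pow_two]; nlinarith
  have h1 : Filter.Tendsto (fun n : ℕ => ∑ i ∈ range n,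
      (1 / ((i : ℝ) + 1) - 1 / ((i : ℝ) + 2))) Filter.atTop (nhds (∑' k : ℕ, (1 / ((k : ℝ) + 1) - 1 / ((k : ℝ) + 2)))) :=
    hsum.hasSum.tendsto_sum_nat
  have h2 : Filter.Tendsto (fun n : ℕ => ∑ i ∈ range n,
      (1 / ((i : ℝ) + 1) - 1 / ((i : ℝ) + 2))) Filter.atTop (nhds 1) := by
    have hps : ∀ n : ℕ, ∑ i ∈ range n, (1 / ((i : ℝ) + 1) - 1 / ((i : ℝ) + 2))
        = 1 - 1 / ((n : ℝ) + 1) := by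
      intro n
      have := Finset.sum_range_sub' (fun i : ℕ => 1 / ((i : ℝ) + 1)) n
      rw [Finset.sum_congr rfl (fun i _ => by push_cast; ring_nf : ∀ i ∈ range n,
        (1 / ((i : ℝ) + 1) - 1 / ((i : ℝ) + 2)) = 1 / ((i : ℝ) + 1) - 1 / (((i+1 : ℕ) : ℝ) + 1)), this]
      norm_num
    simp only [hps]
    have := tendsto_one_div_add_atTop_nhds_zero_nat (𝕜 := ℝ)
    have := (tendsto_const_nhds (x := (1:ℝ)) (f := Filter.atTop (α := ℕ))).sub this
    simpa using this
  have : (∑' k : ℕ, (1 / ((k : ℝ) + 1) - 1 / ((k : ℝ) + 2))) = 1 := tendsto_nhds_unique h1 h2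
  simpa only [this] using hsum.hasSum

/-- For every positive integer `j`,
`Σ_{k=2}^{∞} 1/(k^j (k-1)^j) = 2 (-1)^j Σ_{m=0}^{⌊j/2⌋} C(2j-2m-1, j-1) ζ(2m)`,
where `ζ` is the Riemann zeta function (so `ζ(0) = -1/2`). -/
theorem stmt_1 (j : ℕ) (hj : 1 ≤ j) :
    ((∑' k : ℕ, 1 / (((k : ℝ) + 2) ^ j * ((k : ℝ) + 1) ^ j) : ℝ) : ℂ)
      = 2 * (-1) ^ j * ∑ m ∈ Finset.range (j / 2 + 1),
          ((2 * j - 2 * m - 1).choose (j - 1) : ℂ) * riemannZeta (2 * (m : ℂ)) := by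
  obtain ⟨J, rfl⟩ : ∃ J, j = J + 1 := ⟨j - 1, by omega⟩
  clear hj
  -- pointwise expansion
  have hfk : ∀ k : ℕ, 1 / (((k:ℝ)+2)^(J+1) * ((k:ℝ)+1)^(J+1))
      = ∑ i ∈ range (J+1), ((J+i).choose J : ℝ)
          * ((-1:ℝ)^(J+1) / ((k:ℝ)+2)^(J+1-i) + (-1:ℝ)^i / ((k:ℝ)+1)^(J+1-i)) := by
    intro k
    have h0 : ((k:ℝ)+2) ≠ 0 := by positivity
    have hsub : ((k:ℝ)+2) - 1 = (k:ℝ)+1 := by ring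
    have h1 : ((k:ℝ)+2) - 1 ≠ 0 := by rw [hsub]; positivity
    have h := aux_pf J J ((k:ℝ)+2) h0 h1
    rw [hsub] at h
    rw [h, Finset.mul_sum, ← Finset.sum_add_distrib]
    exact Finset.sum_congr rfl fun i _ => by ring
  -- summability of the i-th term, i < J
  have hci : ∀ i ∈ range J, Summable (fun k : ℕ => ((J+i).choose J : ℝ)
      * ((-1:ℝ)^(J+1) / ((k:ℝ)+2)^(J+1-i) + (-1:ℝ)^i / ((k:ℝ)+1)^(J+1-i))) := by
    intro i hi
    have hp : 2 ≤ J + 1 - i := by simp at hi; omega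
    have s1 : Summable (fun k : ℕ => (-1:ℝ)^(J+1) / ((k:ℝ)+2)^(J+1-i)) := by
      have := (Zr_shift_summable hp).mul_left ((-1:ℝ)^(J+1))
      exact this.congr fun k => by ring
    have s2 : Summable (fun k : ℕ => (-1:ℝ)^i / ((k:ℝ)+1)^(J+1-i)) := by
      have := (Zr_summable hp).mul_left ((-1:ℝ)^i)
      exact this.congr fun k => by ring
    exact ((s1.add s2).mul_left _)
  -- tsum of the i-th term, i < J
  have hti : ∀ i ∈ range J, (∑' k : ℕ, ((J+i).choose J : ℝ)
      * ((-1:ℝ)^(J+1) / ((k:ℝ)+2)^(J+1-i) + (-1:ℝ)^i / ((k:ℝ)+1)^(J+1-i)))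
      = ((J+i).choose J : ℝ) * ((((-1:ℝ)^(J+1) + (-1)^i) * Zr (J+1-i)) - (-1:ℝ)^(J+1)) := by
    intro i hi
    have hp : 2 ≤ J + 1 - i := by simp at hi; omega
    have s1 : Summable (fun k : ℕ => (-1:ℝ)^(J+1) / ((k:ℝ)+2)^(J+1-i)) := by
      have := (Zr_shift_summable hp).mul_left ((-1:ℝ)^(J+1))
      exact this.congr fun k => by ring
    have s2 : Summable (fun k : ℕ => (-1:ℝ)^i / ((k:ℝ)+1)^(J+1-i)) := by
      have := (Zr_summable hp).mul_left ((-1:ℝ)^i)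
      exact this.congr fun k => by ring
    calc (∑' k : ℕ, ((J+i).choose J : ℝ)
          * ((-1:ℝ)^(J+1) / ((k:ℝ)+2)^(J+1-i) + (-1:ℝ)^i / ((k:ℝ)+1)^(J+1-i)))
        = ((J+i).choose J : ℝ) * ∑' k : ℕ,
            ((-1:ℝ)^(J+1) / ((k:ℝ)+2)^(J+1-i) + (-1:ℝ)^i / ((k:ℝ)+1)^(J+1-i)) := tsum_mul_left
      _ = ((J+i).choose J : ℝ) * ((∑' k : ℕ, (-1:ℝ)^(J+1) / ((k:ℝ)+2)^(J+1-i))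
            + ∑' k : ℕ, (-1:ℝ)^i / ((k:ℝ)+1)^(J+1-i)) := by rw [Summable.tsum_add s1 s2]
      _ = ((J+i).choose J : ℝ) * ((-1:ℝ)^(J+1) * (∑' k : ℕ, 1 / ((k:ℝ)+2)^(J+1-i))
            + (-1:ℝ)^i * ∑' k : ℕ, 1 / ((k:ℝ)+1)^(J+1-i)) := by
          rw [← tsum_mul_left, ← tsum_mul_left]
          congr 2
          · exact tsum_congr fun k => by ring
          · exact tsum_congr fun k => by ring
      _ = ((J+i).choose J : ℝ) * ((((-1:ℝ)^(J+1) + (-1)^i) * Zr (J+1-i)) - (-1:ℝ)^(J+1)) := by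
          rw [Zr_shift hp]
          rw [show (∑' k : ℕ, 1 / ((k:ℝ)+1)^(J+1-i)) = Zr (J+1-i) from rfl]
          ring
  -- the last (i = J) term
  have htJ : HasSum (fun k : ℕ => ((J+J).choose J : ℝ)
      * ((-1:ℝ)^(J+1) / ((k:ℝ)+2)^(J+1-J) + (-1:ℝ)^J / ((k:ℝ)+1)^(J+1-J)))
      (((J+J).choose J : ℝ) * (-1:ℝ)^J) := by
    have h := tele.mul_left (((J+J).choose J : ℝ) * (-1:ℝ)^J)
    rw [mul_one] at h
    refine h.congr_fun fun k => ?_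
    rw [show J+1-J = 1 from by omega, pow_one, pow_one]
    ring
  -- total sum
  have hsumS : (∑' k : ℕ, 1 / (((k:ℝ)+2)^(J+1) * ((k:ℝ)+1)^(J+1)))
      = (∑ i ∈ range J, ((J+i).choose J : ℝ)
          * ((((-1:ℝ)^(J+1) + (-1)^i) * Zr (J+1-i)) - (-1:ℝ)^(J+1)))
        + ((J+J).choose J : ℝ) * (-1:ℝ)^J := by
    calc (∑' k : ℕ, 1 / (((k:ℝ)+2)^(J+1) * ((k:ℝ)+1)^(J+1)))
        = ∑' k : ℕ, ((∑ i ∈ range J, ((J+i).choose J : ℝ)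
            * ((-1:ℝ)^(J+1) / ((k:ℝ)+2)^(J+1-i) + (-1:ℝ)^i / ((k:ℝ)+1)^(J+1-i)))
          + ((J+J).choose J : ℝ)
            * ((-1:ℝ)^(J+1) / ((k:ℝ)+2)^(J+1-J) + (-1:ℝ)^J / ((k:ℝ)+1)^(J+1-J))) := by
          refine tsum_congr fun k => ?_
          rw [hfk k, Finset.sum_range_succ]
      _ = (∑' k : ℕ, ∑ i ∈ range J, ((J+i).choose J : ℝ)
            * ((-1:ℝ)^(J+1) / ((k:ℝ)+2)^(J+1-i) + (-1:ℝ)^i / ((k:ℝ)+1)^(J+1-i)))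
          + ∑' k : ℕ, ((J+J).choose J : ℝ)
            * ((-1:ℝ)^(J+1) / ((k:ℝ)+2)^(J+1-J) + (-1:ℝ)^J / ((k:ℝ)+1)^(J+1-J)) :=
          Summable.tsum_add (summable_sum hci) htJ.summable
      _ = (∑ i ∈ range J, ∑' k : ℕ, ((J+i).choose J : ℝ)
            * ((-1:ℝ)^(J+1) / ((k:ℝ)+2)^(J+1-i) + (-1:ℝ)^i / ((k:ℝ)+1)^(J+1-i)))
          + ((J+J).choose J : ℝ) * (-1:ℝ)^J := by
          rw [Summable.tsum_finsetSum hci, htJ.tsum_eq]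
      _ = (∑ i ∈ range J, ((J+i).choose J : ℝ)
            * ((((-1:ℝ)^(J+1) + (-1)^i) * Zr (J+1-i)) - (-1:ℝ)^(J+1)))
          + ((J+J).choose J : ℝ) * (-1:ℝ)^J := by
          rw [Finset.sum_congr rfl hti]
  -- parity helper
  have negpow : ∀ a b : ℕ, a % 2 = b % 2 → (-1:ℝ)^a = (-1)^b := by
    intro a b h
    rcases Nat.even_or_odd a with he | ho
    · have hb : Even b := by rw [Nat.even_iff] at *; omega
      rw [he.neg_one_pow, hb.neg_one_pow]
    · have hb : Odd b := by rw [Nat.odd_iff] at *; omega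
      rw [ho.neg_one_pow, hb.neg_one_pow]
  -- reindex the zeta part
  have hparity : ∑ i ∈ range J, ((J+i).choose J : ℝ) * (((-1:ℝ)^(J+1) + (-1)^i) * Zr (J+1-i))
      = ∑ m ∈ Finset.Icc 1 ((J+1)/2),
          2*(-1:ℝ)^(J+1) * (((2*(J+1)-2*m-1).choose J : ℝ) * Zr (2*m)) := by
    rw [← Finset.sum_filter_of_ne (s := range J) (p := fun i => i % 2 = (J+1) % 2)
      (f := fun i => ((J+i).choose J : ℝ) * (((-1:ℝ)^(J+1) + (-1)^i) * Zr (J+1-i)))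
      (by
        intro i hi hne
        by_contra hp
        apply hne
        have hz : (-1:ℝ)^(J+1) + (-1)^i = 0 := by
          rcases Nat.even_or_odd i with he | ho
          · have hb : Odd (J+1) := by
              rw [Nat.even_iff] at he; rw [Nat.odd_iff]; omega
            rw [he.neg_one_pow, hb.neg_one_pow]; ring
          · have hb : Even (J+1) := by
              rw [Nat.odd_iff] at ho; rw [Nat.even_iff]; omega
            rw [ho.neg_one_pow, hb.neg_one_pow]; ring
        simp only [hz, zero_mul, mul_zero])]
    refine Finset.sum_nbij' (fun i => (J+1-i)/2) (fun m => J+1-2*m) ?_ ?_ ?_ ?_ ?_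
    · intro i hi
      simp only [Finset.mem_filter, Finset.mem_range] at hi
      simp only [Finset.mem_Icc]
      omega
    · intro m hm
      simp only [Finset.mem_Icc] at hm
      simp only [Finset.mem_filter, Finset.mem_range]
      omega
    · intro i hi
      simp only [Finset.mem_filter, Finset.mem_range] at hi
      omega
    · intro m hm
      simp only [Finset.mem_Icc] at hm
      omega
    · intro i hi
      simp only [Finset.mem_filter, Finset.mem_range] at hi
      have h1 : 2*(J+1)-2*((J+1-i)/2)-1 = J + i := by omega
      have h2 : 2*((J+1-i)/2) = J+1-i := by omega
      have h3 : (-1:ℝ)^i = (-1)^(J+1) := negpow i (J+1) (by omega)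
      rw [h1, h2, h3]
      ring
  -- hockey stick
  have hstick : (∑ i ∈ range J, ((J+i).choose J : ℝ)) + ((J+J).choose J : ℝ)
      = ((2*J+1).choose (J+1) : ℝ) := by
    have h1 : ∑ i ∈ range (J+1), ((J+i).choose J) = (2*J+1).choose (J+1) := by
      rw [Finset.sum_congr rfl (fun i _ => by rw [Nat.add_comm J i] :
        ∀ i ∈ range (J+1), (J+i).choose J = (i+J).choose J)]
      rw [Nat.sum_range_add_choose J J]
      congr 1
      omega
    rw [← Nat.cast_sum, ← Nat.cast_add, ← Finset.sum_range_succ, h1]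
  -- final real form
  have hreal : (∑' k : ℕ, 1 / (((k:ℝ)+2)^(J+1) * ((k:ℝ)+1)^(J+1)))
      = 2*(-1:ℝ)^(J+1) * (∑ m ∈ Finset.Icc 1 ((J+1)/2),
          ((2*(J+1)-2*m-1).choose J : ℝ) * Zr (2*m))
        + (-1:ℝ)^J * ((2*J+1).choose (J+1) : ℝ) := by
    rw [hsumS]
    have hsplit : ∑ i ∈ range J, ((J+i).choose J : ℝ)
        * ((((-1:ℝ)^(J+1) + (-1)^i) * Zr (J+1-i)) - (-1:ℝ)^(J+1))
        = (∑ i ∈ range J, ((J+i).choose J : ℝ) * (((-1:ℝ)^(J+1) + (-1)^i) * Zr (J+1-i)))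
          - (-1:ℝ)^(J+1) * ∑ i ∈ range J, ((J+i).choose J : ℝ) := by
      rw [Finset.mul_sum, ← Finset.sum_sub_distrib]
      exact Finset.sum_congr rfl fun i _ => by ring
    rw [hsplit, hparity, ← Finset.mul_sum]
    have h4 : (-1:ℝ)^(J+1) = -(-1:ℝ)^J := by rw [pow_succ]; ring
    rw [h4]
    linear_combination ((-1:ℝ)^J) * hstick
  rw [hreal]
  -- complex side
  rw [Finset.range_eq_Ico, Finset.sum_eq_sum_Ico_succ_bot (by omega :
    0 < (J+1)/2 + 1), Finset.Ico_add_one_right_eq_Icc]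
  have e0 : 2*(J+1)-2*0-1 = 2*J+1 := by omega
  have e1 : J+1-1 = J := by omega
  simp only [e0, e1, Nat.cast_zero, mul_zero, riemannZeta_zero]
  rw [Finset.sum_congr rfl (fun m hm => by
    rw [zeta_nat m (Finset.mem_Icc.mp hm).1] :
    ∀ m ∈ Finset.Icc 1 ((J+1)/2), ((2*(J+1)-2*m-1).choose J : ℂ) * riemannZeta (2*(m:ℂ))
      = ((2*(J+1)-2*m-1).choose J : ℂ) * ((Zr (2*m) : ℝ) : ℂ))]
  have hsymm : ((2*J+1).choose (J+1) : ℝ) = ((2*J+1).choose J : ℝ) := by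
    congr 1
    rw [← Nat.choose_symm (by omega : J ≤ 2*J+1)]
    congr 1
    omega
  rw [hsymm]
  push_cast
  rw [show 2*(J+1)-0-1 = 2*J+1 from by omega]
  ring
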